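/- Let M be a finitely presented right R-module. The natural map M ⊗_R R((z)) → M((z)), sending m ⊗ Σ_{i≥k} r_i z^i to Σ_{i≥k} (m r_i) z^i, is an isomorphism of R((z))-modules. -/

import Mathlib

set_option synthInstance.maxHeartbeats 1000000
set_option maxHeartbeats 1000000

open scoped TensorProduct

namespace FPTensorLaurent

variable {R : Type} [CommRing R]

variable (R) in
/-- The Hahn series with coefficients `f.coeff i • n`. -/
noncomputable def hs {N : Type} [AddCommGroup N] [Module R N]
    (n : N) (f : LaurentSeries R) : HahnSeries ℤ N where
  coeff i := f.coeff i • n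
  isPWO_support' := f.isPWO_support'.mono fun i hi => by
    simp only [Function.mem_support] at hi ⊢
    exact fun h => hi (by rw [h, zero_smul])

@[simp] lemma hs_coeff {N : Type} [AddCommGroup N] [Module R N]
    (n : N) (f : LaurentSeries R) (i : ℤ) : (hs R n f).coeff i = f.coeff i • n := rfl

variable (R) in
/-- The natural map `N ⊗ R((z)) → N((z))`. -/
noncomputable def phi (N : Type) [AddCommGroup N] [Module R N] :
    N ⊗[R] LaurentSeries R →ₗ[R] HahnModule ℤ R N :=
  TensorProduct.lift
  { toFun := fun n =>
      { toFun := fun f => HahnModule.of R (hs R n f)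
        map_add' := fun f g => by
          rw [← HahnModule.of_add]; congr 1; ext i
          simp [add_smul]
        map_smul' := fun r f => by
          rw [RingHom.id_apply]; show HahnModule.of R (hs R n (r • f)) = HahnModule.of R (r • hs R n f); congr 1; ext i
          simp [HahnSeries.coeff_smul, mul_smul] }
    map_add' := fun n n' => by
      refine LinearMap.ext fun f => ?_
      show HahnModule.of R (hs R (n + n') f) = HahnModule.of R (hs R n f) + HahnModule.of R (hs R n' f)
      rw [← HahnModule.of_add]; congr 1; ext i; simp [smul_add]
    map_smul' := fun r n => by
      refine LinearMap.ext fun f => ?_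
      show HahnModule.of R (hs R (r • n) f) = r • HahnModule.of R (hs R n f)
      erw [← HahnModule.of_smul]; congr 1; ext i
      simp only [hs_coeff, HahnSeries.coeff_smul]
      exact smul_comm _ _ _ }

@[simp] lemma phi_tmul {N : Type} [AddCommGroup N] [Module R N]
    (n : N) (f : LaurentSeries R) :
    phi R N (n ⊗ₜ[R] f) = HahnModule.of R (hs R n f) := rfl

/-- Coefficientwise action of a linear map on Hahn modules. -/
noncomputable def hmap {N P : Type} [AddCommGroup N] [Module R N] [AddCommGroup P] [Module R P]
    (g : N →ₗ[R] P) : HahnModule ℤ R N →ₗ[R] HahnModule ℤ R P where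
  toFun x := HahnModule.of R
    { coeff := fun i => g (((HahnModule.of R).symm x).coeff i)
      isPWO_support' := ((HahnModule.of R).symm x).isPWO_support'.mono fun i hi => by
        simp only [Function.mem_support] at hi ⊢
        exact fun h => hi (by rw [h, map_zero]) }
  map_add' x y := by
    rw [← HahnModule.of_add]; congr 1; ext i
    simp [HahnModule.of_symm_add]
  map_smul' r x := by
    rw [RingHom.id_apply]; apply (HahnModule.of R).symm.injective; ext i
    change g (r • ((HahnModule.of R).symm x).coeff i) = r • g (((HahnModule.of R).symm x).coeff i); exact map_smul g r _

@[simp] lemma hmap_coeff {N P : Type} [AddCommGroup N] [Module R N] [AddCommGroup P] [Module R P]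
    (g : N →ₗ[R] P) (x : HahnModule ℤ R N) (i : ℤ) :
    ((HahnModule.of R).symm (hmap g x)).coeff i = g (((HahnModule.of R).symm x).coeff i) := rfl

lemma hmap_phi {N P : Type} [AddCommGroup N] [Module R N] [AddCommGroup P] [Module R P]
    (g : N →ₗ[R] P) (u : N ⊗[R] LaurentSeries R) :
    hmap g (phi R N u) = phi R P (g.rTensor (LaurentSeries R) u) := by
  have h : (hmap g).comp (phi R N) = (phi R P).comp (g.rTensor (LaurentSeries R)) := by
    apply TensorProduct.ext'
    intro n f
    simp only [LinearMap.comp_apply, LinearMap.rTensor_tmul, phi_tmul]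
    apply (HahnModule.of R).symm.injective
    ext i
    simp
  exact LinearMap.congr_fun h u

lemma hmap_lift {Q N : Type} [AddCommGroup Q] [Module R Q] [AddCommGroup N] [Module R N]
    (g : Q →ₗ[R] N) (x : HahnModule ℤ R N)
    (h : ∀ i, ((HahnModule.of R).symm x).coeff i ∈ LinearMap.range g) :
    ∃ s, hmap g s = x := by
  classical
  choose y hy using fun i => LinearMap.mem_range.mp (h i)
  refine ⟨HahnModule.of R
    { coeff := fun i => if ((HahnModule.of R).symm x).coeff i = 0 then 0 else y i
      isPWO_support' := ((HahnModule.of R).symm x).isPWO_support'.mono fun i hi => by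
        simp only [Function.mem_support] at hi ⊢
        exact fun hc => hi (if_pos hc) }, ?_⟩
  apply (HahnModule.of R).symm.injective
  ext i
  simp only [hmap_coeff, Equiv.symm_apply_apply]
  by_cases hc : ((HahnModule.of R).symm x).coeff i = 0
  · rw [if_pos hc, map_zero, hc]
  · rw [if_neg hc, hy i]


section Free
variable {ι : Type} [Fintype ι] [DecidableEq ι]

variable (R) in
noncomputable def extract (j : ι) : HahnModule ℤ R (ι → R) →ₗ[R] LaurentSeries R where
  toFun x :=
    { coeff := fun i => ((HahnModule.of R).symm x).coeff i j
      isPWO_support' := ((HahnModule.of R).symm x).isPWO_support'.mono fun i hi => by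
        simp only [Function.mem_support] at hi ⊢
        exact fun h => hi (by rw [h]; rfl) }
  map_add' x y := by ext i; simp [HahnModule.of_symm_add]
  map_smul' r x := by ext i; simp [HahnModule.of_symm_smul, HahnSeries.coeff_smul]; rfl

@[simp] lemma extract_coeff (j : ι) (x : HahnModule ℤ R (ι → R)) (i : ℤ) :
    (extract R j x).coeff i = ((HahnModule.of R).symm x).coeff i j := rfl

variable (R ι) in
noncomputable def psi : HahnModule ℤ R (ι → R) →ₗ[R] (ι → R) ⊗[R] LaurentSeries R :=
  ∑ j : ι, (TensorProduct.mk R (ι → R) (LaurentSeries R) (Pi.single j 1)).comp (extract R j)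

lemma psi_apply (x : HahnModule ℤ R (ι → R)) :
    psi R ι x = ∑ j : ι, Pi.single j (1 : R) ⊗ₜ[R] extract R j x := by
  simp [psi, LinearMap.sum_apply]

lemma sum_single_smul (v : ι → R) : ∑ j : ι, v j • (Pi.single j (1 : R) : ι → R) = v := by
  ext k
  simp [Finset.sum_apply, Pi.single_apply, Finset.sum_ite_eq']

lemma phi_psi : (phi R (ι → R)).comp (psi R ι) = LinearMap.id := by
  refine LinearMap.ext fun x => ?_
  simp only [LinearMap.comp_apply, LinearMap.id_apply, psi_apply, map_sum]
  apply (HahnModule.of R).symm.injective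
  ext i
  have hcoeff : ∀ (s : Finset ι) (g : ι → HahnModule ℤ R (ι → R)),
      ((HahnModule.of R).symm (∑ j ∈ s, g j)).coeff i = ∑ j ∈ s, ((HahnModule.of R).symm (g j)).coeff i := by
    intro s g
    induction s using Finset.induction with
    | empty => simp
    | insert _ _ h ih => simp [Finset.sum_insert h, HahnModule.of_symm_add, ih]
  rw [hcoeff]
  simp only [phi_tmul, Equiv.symm_apply_apply, hs_coeff, extract_coeff]
  exact congrFun (sum_single_smul (((HahnModule.of R).symm x).coeff i)) _

lemma psi_phi : (psi R ι).comp (phi R (ι → R)) = LinearMap.id := by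
  apply TensorProduct.ext'
  intro v f
  simp only [LinearMap.comp_apply, LinearMap.id_apply, phi_tmul, psi_apply]
  have hextract : ∀ j, extract R j (HahnModule.of R (hs R v f)) = v j • f := by
    intro j
    ext i
    simp only [extract_coeff, Equiv.symm_apply_apply, hs_coeff, HahnSeries.coeff_smul,
      Pi.smul_apply, smul_eq_mul]
    ring
  calc ∑ j : ι, Pi.single j (1 : R) ⊗ₜ[R] extract R j (HahnModule.of R (hs R v f))
      = ∑ j : ι, (v j • (Pi.single j (1 : R) : ι → R)) ⊗ₜ[R] f := by
        refine Finset.sum_congr rfl fun j _ => ?_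
        rw [hextract, TensorProduct.smul_tmul, TensorProduct.tmul_smul]
    _ = v ⊗ₜ[R] f := by rw [← TensorProduct.sum_tmul, sum_single_smul]

lemma phi_free_bijective : Function.Bijective (phi R (ι → R)) := by
  constructor
  · exact Function.LeftInverse.injective (g := psi R ι) fun u =>
      LinearMap.congr_fun (psi_phi (R := R) (ι := ι)) u
  · exact Function.RightInverse.surjective (g := psi R ι) fun x =>
      LinearMap.congr_fun (phi_psi (R := R) (ι := ι)) x

end Free


lemma phi_smul {M : Type} [AddCommGroup M] [Module R M] (g f : LaurentSeries R) (m : M) :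
    phi R M (m ⊗ₜ[R] (g * f)) = g • phi R M (m ⊗ₜ[R] f) := by
  apply (HahnModule.of R).symm.injective
  ext i
  have hsupp : ((HahnModule.of R).symm (phi R M (m ⊗ₜ[R] f))).support ⊆ f.support := by
    intro a ha
    simp only [HahnSeries.mem_support, phi_tmul, Equiv.symm_apply_apply, hs_coeff] at ha ⊢
    exact fun h => ha (by rw [h, zero_smul])
  rw [HahnModule.coeff_smul_right (x := g) (y := phi R M (m ⊗ₜ[R] f)) f.isPWO_support hsupp]
  show (g * f).coeff i • m = _
  rw [← HahnSeries.of_symm_smul_of_eq_mul,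
    HahnModule.coeff_smul_right (x := g) (y := HahnModule.of R f) f.isPWO_support
      (by rw [Equiv.symm_apply_apply]),
    Finset.sum_smul]
  refine Finset.sum_congr rfl fun ij _ => ?_
  simp only [Equiv.symm_apply_apply, phi_tmul, hs_coeff, smul_eq_mul]
  exact smul_assoc (g.coeff ij.1) (f.coeff ij.2) m

end FPTensorLaurent

open FPTensorLaurent

/-- Let `M` be a finitely presented module over `R`.  The natural map
`M ⊗_R R((z)) → M((z))`, sending `m ⊗ Σ_{i≥k} r_i z^i` to `Σ_{i≥k} (m r_i) z^i`, is an
isomorphism of `R((z))`-modules.  Here `R((z))` is the ring `LaurentSeries R` of formal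
Laurent series and `M((z))` is the module `HahnModule ℤ R M` of formal Laurent series with
coefficients in `M`, with its natural `R((z))`-module structure.  The `R((z))`-linearity
is expressed on pure tensors (where `g • (m ⊗ f) = m ⊗ (g * f)`); together with
additivity of `e` this says `e` is `R((z))`-linear. -/
theorem finitePresentation_tensor_laurentSeries_iso
    (R M : Type) [CommRing R] [AddCommGroup M] [Module R M]
    [Module.FinitePresentation R M] :
    ∃ e : (M ⊗[R] LaurentSeries R) ≃+ HahnModule ℤ R M,
      (∀ (m : M) (f : LaurentSeries R) (n : ℤ),
        ((HahnModule.of R).symm (e (m ⊗ₜ[R] f))).coeff n = f.coeff n • m) ∧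
      (∀ (g f : LaurentSeries R) (m : M),
        e (m ⊗ₜ[R] (g * f)) = g • e (m ⊗ₜ[R] f)) := by
  classical
  obtain ⟨n, f, hf⟩ := Module.Finite.exists_fin' R M
  have hker : (LinearMap.ker f).FG := Module.FinitePresentation.fg_ker f hf
  obtain ⟨m', w, hw⟩ := Submodule.fg_iff_exists_fin_generating_family.mp hker
  set g : (Fin m' → R) →ₗ[R] (Fin n → R) := Fintype.linearCombination R w with hgdef
  have hrange : LinearMap.range g = LinearMap.ker f := by
    rw [hgdef, Fintype.range_linearCombination, hw]
  have hsurj : Function.Surjective (phi R M) := by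
    intro y
    obtain ⟨x, hx⟩ := hmap_lift f y (fun i => by
      rw [LinearMap.range_eq_top.mpr hf]; trivial)
    obtain ⟨t, ht⟩ := (phi_free_bijective (R := R) (ι := Fin n)).2 x
    exact ⟨f.rTensor (LaurentSeries R) t, by rw [← hmap_phi, ht, hx]⟩
  have hinj : Function.Injective (phi R M) := by
    refine (injective_iff_map_eq_zero _).mpr ?_
    intro u hu
    obtain ⟨t, rfl⟩ := LinearMap.rTensor_surjective (LaurentSeries R) hf u
    have h0 : hmap f (phi R (Fin n → R) t) = 0 := by rw [hmap_phi, hu]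
    have hcoeffs : ∀ i, ((HahnModule.of R).symm (phi R (Fin n → R) t)).coeff i ∈
        LinearMap.range g := by
      intro i
      rw [hrange, LinearMap.mem_ker]
      have h1 := congrArg (fun z => ((HahnModule.of R).symm z).coeff i) h0
      simpa using h1
    obtain ⟨s, hsx⟩ := hmap_lift g _ hcoeffs
    obtain ⟨s', rfl⟩ := (phi_free_bijective (R := R) (ι := Fin m')).2 s
    rw [hmap_phi] at hsx
    have ht' : g.rTensor (LaurentSeries R) s' = t :=
      (phi_free_bijective (R := R) (ι := Fin n)).1 hsx
    have hfg : f ∘ₗ g = 0 := by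
      refine LinearMap.ext fun v => ?_
      have : g v ∈ LinearMap.ker f := hrange ▸ LinearMap.mem_range_self g v
      simpa using this
    have hcomp : f.rTensor (LaurentSeries R) (g.rTensor (LaurentSeries R) s') =
        (f ∘ₗ g).rTensor (LaurentSeries R) s' := by
      rw [LinearMap.rTensor_comp]; rfl
    rw [← ht', hcomp, hfg, LinearMap.rTensor_zero, LinearMap.zero_apply]
  refine ⟨(LinearEquiv.ofBijective (phi R M) ⟨hinj, hsurj⟩).toAddEquiv,
    fun m f i => rfl, fun gg ff m => phi_smul gg ff m⟩
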